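/- Let Ω ⊆ ℝⁿ be bounded, U compact, and suppose V*, J : Ω × [0,T] → ℝ are such that V* is Lipschitz and, at every point (y,s) where V* is differentiable, inf_{u∈U} {∂_t V*(y,s) + c(y,u,s) + ∇_x V*(y,s)ᵀ f(y,u)} = 0, while J is C². Define H_F(x,t,u) := ∂_t F(x,t) + c(x,u,t) + ∇_x F(x,t)ᵀ f(x,u) and H̃_F(x,t) := inf_{u∈U} H_F(x,t,u). Then ess sup_{(y,s)∈Ω×[0,T]} H̃_J(y,s) ≤ M‖V* − J‖_{W^{1,∞}(Ω×[0,T])} and ess inf_{(y,s)∈Ω×[0,T]} H̃_J(y,s) ≥ −M‖V* − J‖_{W^{1,∞}(Ω×[0,T])}, where M := max{1, max_{1≤i≤n} sup_{(x,u)∈Ω×U} |f_i(x,u)|}. -/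

import Mathlib

open Set MeasureTheory

/-- Decomposition of a continuous linear functional on `(Fin n → ℝ) × ℝ`
in terms of its values on the standard basis vectors. -/
theorem hamiltonian_bounds_clm_decomp (n : ℕ) (Φ : ((Fin n → ℝ) × ℝ) →L[ℝ] ℝ)
    (v : Fin n → ℝ) :
    Φ (v, 1) = Φ (0, 1) + ∑ i, v i * Φ (Pi.single i 1, 0) := by
  have hv : (v, (1:ℝ)) = ((0:Fin n → ℝ), (1:ℝ)) +
      ∑ i, v i • ((Pi.single i 1 : Fin n → ℝ), (0:ℝ)) := by
    rw [Prod.ext_iff]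
    constructor
    · simp only [Prod.fst_add, Prod.fst_sum, Prod.smul_mk]
      funext j
      simp [Finset.sum_apply, Pi.single_apply, Finset.sum_ite_eq', mul_comm]
    · simp only [Prod.snd_add, Prod.snd_sum, Prod.smul_mk]
      simp
  rw [hv, map_add, map_sum]
  congr 1
  refine Finset.sum_congr rfl fun i _ => ?_
  rw [Φ.map_smul, smul_eq_mul]

/-- Bounds on the Hamiltonian of an approximate value function: if `V*` is
Lipschitz and satisfies the HJB equation at each of its points of
differentiability, and `J ∈ C²`, then almost everywhere on `Ω × [0,T]` the
minimized Hamiltonian `H̃_J` of `J` is bounded in absolute value by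
`max{1, maxᵢ sup |fᵢ|} · ‖V* − J‖_{W^{1,∞}(Ω×[0,T])}`. -/
theorem hamiltonian_bounds_by_sobolev_distance (n m : ℕ)
    (Ω : Set (Fin n → ℝ)) (hΩbdd : Bornology.IsBounded Ω)
    (U : Set (Fin m → ℝ)) (hU : IsCompact U) (hUne : U.Nonempty)
    (T : ℝ) (hT : 0 < T)
    (f : (Fin n → ℝ) → (Fin m → ℝ) → (Fin n → ℝ))
    (c : (Fin n → ℝ) → (Fin m → ℝ) → ℝ → ℝ)
    (hf : Continuous fun q : (Fin n → ℝ) × (Fin m → ℝ) => f q.1 q.2)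
    (hc : Continuous fun q : (Fin n → ℝ) × (Fin m → ℝ) × ℝ => c q.1 q.2.1 q.2.2)
    (Mf : ℝ) (hMf : ∀ x ∈ Ω, ∀ u ∈ U, ∀ i, |f x u i| ≤ Mf)
    (Vstar J : (Fin n → ℝ) × ℝ → ℝ) (L : NNReal)
    (hVlip : LipschitzOnWith L Vstar (Ω ×ˢ Icc (0:ℝ) T))
    (hJ : ContDiff ℝ 2 J)
    -- `V*` satisfies the HJB equation wherever it is differentiable:
    (hHJB : ∀ p ∈ Ω ×ˢ Icc (0:ℝ) T, DifferentiableAt ℝ Vstar p →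
      IsGLB {r : ℝ | ∃ u ∈ U,
        r = fderiv ℝ Vstar p (f p.1 u, 1) + c p.1 u p.2} 0)
    -- `W` bounds the `W^{1,∞}(Ω×[0,T])` norm of `V* − J` (sum of the ess sups
    -- of `|V*−J|` and of all its first-order partial derivatives):
    (W : ℝ)
    (hW : ∀ᵐ p ∂(volume.restrict (Ω ×ˢ Icc (0:ℝ) T)),
      DifferentiableAt ℝ Vstar p ∧
      |Vstar p - J p| +
        |fderiv ℝ Vstar p ((0 : Fin n → ℝ), (1:ℝ)) -
          fderiv ℝ J p ((0 : Fin n → ℝ), (1:ℝ))| +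
        ∑ i : Fin n,
          |fderiv ℝ Vstar p (Pi.single i 1, (0:ℝ)) -
            fderiv ℝ J p (Pi.single i 1, (0:ℝ))| ≤ W) :
    ∀ᵐ p ∂(volume.restrict (Ω ×ˢ Icc (0:ℝ) T)),
      |sInf {r : ℝ | ∃ u ∈ U,
        r = fderiv ℝ J p (f p.1 u, 1) + c p.1 u p.2}| ≤ max 1 Mf * W := by
  classical
  set s : Set ((Fin n → ℝ) × ℝ) := Ω ×ˢ Icc (0:ℝ) T with hs
  set B : ℝ := max 1 Mf * W with hB
  -- the parametrized Hamiltonian of J is jointly continuous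
  have hfd : Continuous (fderiv ℝ J) := hJ.continuous_fderiv (by norm_num)
  have hφ : Continuous fun q : ((Fin n → ℝ) × ℝ) × (Fin m → ℝ) =>
      fderiv ℝ J q.1 (f q.1.1 q.2, 1) + c q.1.1 q.2 q.1.2 := by
    apply Continuous.add
    · exact (hfd.comp continuous_fst).clm_apply
        (((hf.comp ((continuous_fst.comp continuous_fst).prodMk
          continuous_snd)).prodMk continuous_const))
    · exact hc.comp ((continuous_fst.comp continuous_fst).prodMk
        (continuous_snd.prodMk (continuous_snd.comp continuous_fst)))
  -- the minimized Hamiltonian of J is continuous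
  have hset : ∀ p : (Fin n → ℝ) × ℝ,
      {r : ℝ | ∃ u ∈ U, r = fderiv ℝ J p (f p.1 u, 1) + c p.1 u p.2}
        = (fun u => fderiv ℝ J p (f p.1 u, 1) + c p.1 u p.2) '' U := by
    intro p; ext r; simp [eq_comm]
  have hg : Continuous fun p : (Fin n → ℝ) × ℝ =>
      sInf {r : ℝ | ∃ u ∈ U, r = fderiv ℝ J p (f p.1 u, 1) + c p.1 u p.2} := by
    simp only [hset]
    exact hU.continuous_sInf hφ
  -- the pointwise statement: membership + the `hW` bound imply the conclusion
  have key : ∀ p ∈ s, (DifferentiableAt ℝ Vstar p ∧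
      |Vstar p - J p| +
        |fderiv ℝ Vstar p ((0 : Fin n → ℝ), (1:ℝ)) -
          fderiv ℝ J p ((0 : Fin n → ℝ), (1:ℝ))| +
        ∑ i : Fin n,
          |fderiv ℝ Vstar p (Pi.single i 1, (0:ℝ)) -
            fderiv ℝ J p (Pi.single i 1, (0:ℝ))| ≤ W) →
      |sInf {r : ℝ | ∃ u ∈ U,
        r = fderiv ℝ J p (f p.1 u, 1) + c p.1 u p.2}| ≤ B := by
    rintro p hp ⟨hdiff, hsum⟩
    have hpΩ : p.1 ∈ Ω := hp.1
    set D := fderiv ℝ Vstar p with hD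
    set E := fderiv ℝ J p with hE
    have hglb := hHJB p hp hdiff
    -- componentwise bound on the difference of the Hamiltonians
    have hdelta : ∀ u ∈ U,
        |E (f p.1 u, 1) - D (f p.1 u, 1)| ≤ B := by
      intro u hu
      have hDdec := hamiltonian_bounds_clm_decomp n D (f p.1 u)
      have hEdec := hamiltonian_bounds_clm_decomp n E (f p.1 u)
      have hdiffeq : E (f p.1 u, 1) - D (f p.1 u, 1)
          = (E (0,1) - D (0,1)) + ∑ i, f p.1 u i *
              (E (Pi.single i 1, 0) - D (Pi.single i 1, 0)) := by
        have hsplit : ∑ i, f p.1 u i *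
            (E (Pi.single i 1, 0) - D (Pi.single i 1, 0))
            = ∑ i, f p.1 u i * E (Pi.single i 1, 0)
              - ∑ i, f p.1 u i * D (Pi.single i 1, 0) := by
          rw [← Finset.sum_sub_distrib]
          exact Finset.sum_congr rfl fun i _ => by ring
        rw [hDdec, hEdec, hsplit]
        ring
      have hmax1 : (1:ℝ) ≤ max 1 Mf := le_max_left _ _
      have hmaxf : Mf ≤ max 1 Mf := le_max_right _ _
      have hmax0 : (0:ℝ) ≤ max 1 Mf := le_trans zero_le_one hmax1
      calc |E (f p.1 u, 1) - D (f p.1 u, 1)|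
          ≤ |E (0,1) - D (0,1)| + ∑ i, |f p.1 u i| *
              |E (Pi.single i 1, 0) - D (Pi.single i 1, 0)| := by
            rw [hdiffeq]
            refine (abs_add_le _ _).trans (add_le_add_right ?_ _)
            exact (Finset.abs_sum_le_sum_abs _ _).trans
              (Finset.sum_le_sum fun i _ => le_of_eq (abs_mul _ _))
        _ ≤ |E (0,1) - D (0,1)| + ∑ i, Mf *
              |E (Pi.single i 1, 0) - D (Pi.single i 1, 0)| := by
            refine add_le_add_right (Finset.sum_le_sum fun i _ => ?_) _
            exact mul_le_mul_of_nonneg_right (hMf p.1 hpΩ u hu i) (abs_nonneg _)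
        _ ≤ max 1 Mf * (|Vstar p - J p| + |D (0,1) - E (0,1)|
              + ∑ i, |D (Pi.single i 1, 0) - E (Pi.single i 1, 0)|) := by
            rw [mul_add, mul_add, Finset.mul_sum]
            have h1 : |E (0,1) - D (0,1)| ≤ max 1 Mf * |D (0,1) - E (0,1)| := by
              rw [abs_sub_comm]
              nlinarith [abs_nonneg (D (0,1) - E (0,1))]
            have h2 : ∀ i : Fin n, Mf * |E (Pi.single i 1, 0) - D (Pi.single i 1, 0)|
                ≤ max 1 Mf * |D (Pi.single i 1, 0) - E (Pi.single i 1, 0)| := by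
              intro i
              rw [abs_sub_comm]
              exact mul_le_mul_of_nonneg_right hmaxf (abs_nonneg _)
            have h3 : (0:ℝ) ≤ max 1 Mf * |Vstar p - J p| :=
              mul_nonneg hmax0 (abs_nonneg _)
            have h4 := Finset.sum_le_sum fun i (_ : i ∈ Finset.univ) => h2 i
            linarith
        _ ≤ max 1 Mf * W := mul_le_mul_of_nonneg_left hsum hmax0
    -- compare infima
    set SJ := {r : ℝ | ∃ u ∈ U, r = E (f p.1 u, 1) + c p.1 u p.2} with hSJ
    have hSJne : SJ.Nonempty := by
      obtain ⟨u, hu⟩ := hUne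
      exact ⟨E (f p.1 u, 1) + c p.1 u p.2, u, hu, rfl⟩
    have hlow : ∀ r ∈ SJ, -B ≤ r := by
      rintro r ⟨u, hu, rfl⟩
      have h0 : 0 ≤ D (f p.1 u, 1) + c p.1 u p.2 :=
        hglb.1 ⟨u, hu, rfl⟩
      have := hdelta u hu
      have := abs_le.1 this
      linarith [this.1]
    have hlower : -B ≤ sInf SJ := le_csInf hSJne hlow
    have hupper : sInf SJ ≤ B := by
      have hlb : sInf SJ - B ∈ lowerBounds
          {r : ℝ | ∃ u ∈ U, r = D (f p.1 u, 1) + c p.1 u p.2} := by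
        rintro r ⟨u, hu, rfl⟩
        have hmem : E (f p.1 u, 1) + c p.1 u p.2 ∈ SJ := ⟨u, hu, rfl⟩
        have hle : sInf SJ ≤ E (f p.1 u, 1) + c p.1 u p.2 :=
          csInf_le ⟨-B, hlow⟩ hmem
        have := abs_le.1 (hdelta u hu)
        linarith [this.2]
      have := hglb.2 hlb
      linarith
    exact abs_le.2 ⟨hlower, hupper⟩
  -- measure-theoretic bookkeeping (Ω need not be measurable)
  rw [ae_iff] at hW ⊢
  set N : Set ((Fin n → ℝ) × ℝ) := {p | ¬ |sInf {r : ℝ | ∃ u ∈ U,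
      r = fderiv ℝ J p (f p.1 u, 1) + c p.1 u p.2}| ≤ B} with hN
  have hNmeas : MeasurableSet N := by
    have : N = (fun p => |sInf {r : ℝ | ∃ u ∈ U,
        r = fderiv ℝ J p (f p.1 u, 1) + c p.1 u p.2}|) ⁻¹' (Ioi B) := by
      ext p; simp [hN, not_le]
    rw [this]
    exact (hg.abs.measurable) measurableSet_Ioi
  have hsub : N ∩ s ⊆ {p | ¬ (DifferentiableAt ℝ Vstar p ∧
      |Vstar p - J p| +
        |fderiv ℝ Vstar p ((0 : Fin n → ℝ), (1:ℝ)) -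
          fderiv ℝ J p ((0 : Fin n → ℝ), (1:ℝ))| +
        ∑ i : Fin n,
          |fderiv ℝ Vstar p (Pi.single i 1, (0:ℝ)) -
            fderiv ℝ J p (Pi.single i 1, (0:ℝ))| ≤ W)} := by
    rintro p ⟨hpN, hps⟩
    intro hP
    exact hpN (key p hps hP)
  refine le_antisymm ?_ zero_le
  calc volume.restrict s N = volume (N ∩ s) := Measure.restrict_apply hNmeas
    _ ≤ volume ({p | ¬ (DifferentiableAt ℝ Vstar p ∧
          |Vstar p - J p| +
            |fderiv ℝ Vstar p ((0 : Fin n → ℝ), (1:ℝ)) -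
              fderiv ℝ J p ((0 : Fin n → ℝ), (1:ℝ))| +
            ∑ i : Fin n,
              |fderiv ℝ Vstar p (Pi.single i 1, (0:ℝ)) -
                fderiv ℝ J p (Pi.single i 1, (0:ℝ))| ≤ W)} ∩ s) := by
        exact measure_mono (fun p hp => ⟨hsub hp, hp.2⟩)
    _ ≤ volume.restrict s _ := Measure.le_restrict_apply _ _
    _ = 0 := hW
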